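/- Let e ∈ {0, 1, …, N−1} and suppose 2e ≢ 1 − N/2 (mod N). For every odd shift τ = 2τ0 + 1 with 0 ≤ τ0 ≤ N−1, the periodic autocorrelation of S^e satisfies: R_{S^e}(2τ0+1) = −N − N2 if τ0 ≡ −e − N/2 or τ0 ≡ e − 1 + N/2 (mod N); R_{S^e}(2τ0+1) = −N1 − N2 if τ0 ≡ −e or τ0 ≡ e − 1 (mod N); and R_{S^e}(2τ0+1) = −2N2 otherwise. -/

import Mathlib

/-- The geometric sequence of the first type: `t¹ₙ = 1` iff the Legendre symbol of
`Tr(ω^n)` is `-1`, and `0` otherwise (i.e. when the symbol is `0` or `1`). -/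
noncomputable def ntuT1 (p : ℕ) [Fact p.Prime] {F : Type} [Field F]
    [Algebra (ZMod p) F] (ω : F) (n : ℕ) : ZMod 2 :=
  if legendreSym p ((Algebra.trace (ZMod p) F (ω ^ n)).val : ℤ) = -1 then 1 else 0

/-- The geometric sequence of the second type: `t²ₙ = 0` iff the Legendre symbol of
`Tr(ω^n)` is `1`, and `1` otherwise (i.e. when the symbol is `0` or `-1`). -/
noncomputable def ntuT2 (p : ℕ) [Fact p.Prime] {F : Type} [Field F]
    [Algebra (ZMod p) F] (ω : F) (n : ℕ) : ZMod 2 :=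
  if legendreSym p ((Algebra.trace (ZMod p) F (ω ^ n)).val : ℤ) = 1 then 0 else 1

/-- Periodic cross-correlation at shift `τ` of two `N`-periodic binary sequences:
`R_{s,s'}(τ) = Σ_{i=0}^{N-1} (-1)^{s_i + s'_{i+τ}}`, indices taken modulo `N`. -/
def pcorr (N : ℕ) (s s' : ℕ → ZMod 2) (τ : ℤ) : ℤ :=
  ∑ i ∈ Finset.range N, (-1 : ℤ) ^ ((s i + s' ((((i : ℤ) + τ) % (N : ℤ)).toNat)).val)

/-- The interleaved sequence of `t` and the left shift by `e` of `u`: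
`n = 2j ↦ t j`, `n = 2j+1 ↦ u (j + e)`. -/
def ntuInterleave (t u : ℕ → ZMod 2) (e : ℕ) (n : ℕ) : ZMod 2 :=
  if n % 2 = 0 then t (n / 2) else u (n / 2 + e)

set_option linter.unusedSectionVars false
namespace St7
open Finset Function

variable (p : ℕ) [Fact p.Prime]

/-- Legendre symbol as a function on `ZMod p`. -/
noncomputable def l' (a : ZMod p) : ℤ := legendreSym p (a.val : ℤ)

lemma l'_eq (a : ZMod p) : l' p a = quadraticChar (ZMod p) a := by
  rw [l', legendreSym]; norm_cast; rw [ZMod.natCast_val, ZMod.cast_id]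

lemma l'_zero : l' p 0 = 0 := by rw [l'_eq]; exact quadraticChar_zero

lemma l'_mul (a b : ZMod p) : l' p (a * b) = l' p a * l' p b := by
  simp only [l'_eq]; exact map_mul _ a b

lemma l'_sq (a : ZMod p) (ha : a ≠ 0) : l' p a * l' p a = 1 := by
  have := quadraticChar_sq_one (F := ZMod p) ha
  rw [pow_two] at this; simp only [l'_eq]; exact this

lemma sum_l' (hp2 : p ≠ 2) : ∑ a : ZMod p, l' p a = 0 := by
  simp only [l'_eq]
  exact_mod_cast quadraticChar_sum_zero (F := ZMod p) (by rw [ZMod.ringChar_zmod_n]; exact hp2)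

noncomputable def f' (a : ZMod p) : ℤ := if a = 0 then 1 else l' p a
noncomputable def g' (a : ZMod p) : ℤ := if a = 0 then -1 else l' p a

lemma sum_f' (hp2 : p ≠ 2) : ∑ a : ZMod p, f' p a = 1 := by
  have h : ∀ a : ZMod p, f' p a = l' p a + if a = 0 then 1 else 0 := by
    intro a; by_cases h : a = 0 <;> simp [f', h, l'_zero]
  simp only [h, Finset.sum_add_distrib, sum_l' p hp2, Finset.sum_ite_eq' Finset.univ (0 : ZMod p)]
  simp

lemma sum_g' (hp2 : p ≠ 2) : ∑ a : ZMod p, g' p a = -1 := by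
  have h : ∀ a : ZMod p, g' p a = l' p a - if a = 0 then 1 else 0 := by
    intro a; by_cases h : a = 0 <;> simp [g', h, l'_zero]
  simp only [h, Finset.sum_sub_distrib, sum_l' p hp2, Finset.sum_ite_eq' Finset.univ (0 : ZMod p)]
  simp

lemma sum_f'g' (u : ZMod p) (hu : u ≠ 0) :
    ∑ a : ZMod p, f' p a * g' p (u * a) = ((p : ℤ) - 1) * l' p u - 1 := by
  rw [← Finset.sum_erase_add _ _ (Finset.mem_univ (0 : ZMod p))]
  have h0 : f' p 0 * g' p (u * 0) = -1 := by simp [f', g']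
  have h1 : ∀ a ∈ Finset.univ.erase (0 : ZMod p), f' p a * g' p (u * a) = l' p u := by
    intro a ha
    have ha0 : a ≠ 0 := Finset.ne_of_mem_erase ha
    have hua : u * a ≠ 0 := mul_ne_zero hu ha0
    rw [f', g', if_neg ha0, if_neg hua, l'_mul]
    rw [mul_comm (l' p u), ← mul_assoc, l'_sq p a ha0, one_mul]
  rw [Finset.sum_congr rfl h1, h0, Finset.sum_const, Finset.card_erase_of_mem (Finset.mem_univ _)]
  have : Fintype.card (ZMod p) = p := ZMod.card p
  rw [Finset.card_univ, this]
  have hp1 : (1:ℕ) ≤ p := (Fact.out (p := p.Prime)).pos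
  rw [nsmul_eq_mul, Nat.cast_sub hp1]
  push_cast
  ring

/-- Sum over a finite abelian group of `h ∘ φ` for surjective `φ`. -/
lemma sum_comp_surj {V W : Type} [AddCommGroup V] [AddCommGroup W] [Fintype V] [Fintype W]
    [DecidableEq W] (φ : V →+ W) (hs : Surjective φ) (k : ℕ)
    (hk : Fintype.card V = Fintype.card W * k) (h : W → ℤ) :
    ∑ v : V, h (φ v) = k * ∑ w : W, h w := by
  classical
  have hfib : ∀ w : W, (Finset.univ.filter (fun v : V => φ v = w)).card
      = (Finset.univ.filter (fun v : V => φ v = 0)).card := by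
    intro w
    obtain ⟨d, hd⟩ := hs w
    apply Finset.card_bij (fun v _ => v - d)
    · intro a ha; simp only [Finset.mem_filter, Finset.mem_univ, true_and] at ha ⊢
      rw [map_sub, ha, hd, sub_self]
    · intro a ha b hb hab; exact sub_left_injective hab
    · intro b hb; refine ⟨b + d, ?_, by abel⟩
      simp only [Finset.mem_filter, Finset.mem_univ, true_and] at hb ⊢
      rw [map_add, hb, hd, zero_add]
  set k0 := (Finset.univ.filter (fun v : V => φ v = 0)).card with hk0
  have hcard : Fintype.card V = Fintype.card W * k0 := by
    rw [← Finset.card_univ, Finset.card_eq_sum_card_fiberwise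
      (f := φ) (t := Finset.univ) (fun x _ => Finset.mem_univ _)]
    rw [Finset.sum_congr rfl (fun w _ => hfib w), Finset.sum_const, Finset.card_univ, smul_eq_mul]
  have hkk : k0 = k := by
    have hW : 0 < Fintype.card W := Fintype.card_pos
    exact Nat.eq_of_mul_eq_mul_left hW (hcard ▸ hk)
  rw [← Finset.sum_fiberwise_of_maps_to (g := φ) (t := Finset.univ)
    (fun x _ => Finset.mem_univ _) (fun v => h (φ v))]
  have : ∀ w : W, ∑ v ∈ Finset.univ.filter (fun v : V => φ v = w), h (φ v) = k * h w := by
    intro w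
    rw [Finset.sum_congr rfl (fun v hv => by
      rw [(Finset.mem_filter.mp hv).2]), Finset.sum_const, hfib w, hkk, nsmul_eq_mul]
  rw [Finset.sum_congr rfl (fun w _ => this w), Finset.mul_sum]


variable {F : Type} [Field F] [Fintype F] [Algebra (ZMod p) F]

lemma tr_surj : Surjective (Algebra.trace (ZMod p) F) := by
  exact Algebra.trace_surjective _ _

lemma tr_smul (u : ZMod p) (x : F) :
    Algebra.trace (ZMod p) F (algebraMap (ZMod p) F u * x)
      = u * Algebra.trace (ZMod p) F x := by
  rw [← Algebra.smul_def, map_smul, smul_eq_mul]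

lemma tr_nd (a : F) (ha : a ≠ 0) : ∃ x, Algebra.trace (ZMod p) F (a * x) ≠ 0 := by
  obtain ⟨y, hy⟩ := tr_surj p (F := F) 1
  exact ⟨a⁻¹ * y, by rw [← mul_assoc, mul_inv_cancel₀ ha, one_mul, hy]; exact one_ne_zero⟩

/-- The joint map `x ↦ (Tr x, Tr (c x))` as an `AddMonoidHom`. -/
noncomputable def jmap (c : F) : F →+ ZMod p × ZMod p where
  toFun x := (Algebra.trace (ZMod p) F x, Algebra.trace (ZMod p) F (c * x))
  map_zero' := by simp
  map_add' x y := by simp [mul_add, Prod.ext_iff]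

lemma jmap_surj (c : F) (hc : ∀ u : ZMod p, algebraMap (ZMod p) F u ≠ c) :
    Surjective (jmap p c) := by
  obtain ⟨x1, hx1⟩ := tr_surj p (F := F) 1
  by_cases hy : ∃ y, Algebra.trace (ZMod p) F y = 0 ∧ Algebra.trace (ZMod p) F (c * y) ≠ 0
  · obtain ⟨y, hy0, hy1⟩ := hy
    rintro ⟨a, b⟩
    refine ⟨a • x1 + ((b - a * Algebra.trace (ZMod p) F (c * x1))
        / Algebra.trace (ZMod p) F (c * y)) • y, ?_⟩
    set s := (b - a * Algebra.trace (ZMod p) F (c * x1)) / Algebra.trace (ZMod p) F (c * y)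
    have h1 : Algebra.trace (ZMod p) F (a • x1 + s • y) = a := by
      rw [map_add, map_smul, map_smul, hx1, hy0, smul_eq_mul, smul_eq_mul, mul_one, mul_zero,
        add_zero]
    have h2 : Algebra.trace (ZMod p) F (c * (a • x1 + s • y)) = b := by
      rw [mul_add, mul_smul_comm, mul_smul_comm, map_add, map_smul, map_smul,
        smul_eq_mul, smul_eq_mul]
      field_simp [s]
      rw [show s * Algebra.trace (ZMod p) F (c * y) = b - a * Algebra.trace (ZMod p) F (c * x1) from div_mul_cancel₀ _ hy1]; ring
    simp only [jmap, AddMonoidHom.coe_mk, ZeroHom.coe_mk, h1, h2]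
  · push_neg at hy
    exfalso
    apply hc (Algebra.trace (ZMod p) F (c * x1))
    have key : ∀ x : F, Algebra.trace (ZMod p) F (c * x)
        = Algebra.trace (ZMod p) F x * Algebra.trace (ZMod p) F (c * x1) := by
      intro x
      have h0 : Algebra.trace (ZMod p) F (x - Algebra.trace (ZMod p) F x • x1) = 0 := by
        rw [map_sub, map_smul, hx1, smul_eq_mul, mul_one, sub_self]
      have := hy _ h0
      rw [mul_sub, mul_smul_comm, map_sub, map_smul, smul_eq_mul, sub_eq_zero] at this
      exact this
    by_contra hne
    have hd : c - algebraMap (ZMod p) F (Algebra.trace (ZMod p) F (c * x1)) ≠ 0 := by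
      intro h
      exact hne (by linear_combination (norm := ring_nf) -h)
    obtain ⟨x, hx⟩ := tr_nd p _ hd
    apply hx
    rw [sub_mul, map_sub, key, tr_smul]
    ring


variable (m : ℕ)

lemma sum_trace (hm : 1 ≤ m) (hcard : Fintype.card F = p ^ m) (h : ZMod p → ℤ) :
    ∑ x : F, h (Algebra.trace (ZMod p) F x) = (p:ℤ) ^ (m-1) * ∑ a : ZMod p, h a := by
  have := sum_comp_surj (Algebra.trace (ZMod p) F).toAddMonoidHom
    (tr_surj p) (p ^ (m-1))
    (by rw [hcard, ZMod.card, ← pow_succ']; congr 1; omega) h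
  simp only [LinearMap.toAddMonoidHom_coe] at this
  rw [this]; push_cast; ring

lemma sum_jmap (hm : 2 ≤ m) (hcard : Fintype.card F = p ^ m) (c : F)
    (hc : ∀ u : ZMod p, algebraMap (ZMod p) F u ≠ c) (h : ZMod p → ZMod p → ℤ) :
    ∑ x : F, h (Algebra.trace (ZMod p) F x) (Algebra.trace (ZMod p) F (c * x))
      = (p:ℤ) ^ (m-2) * ∑ a : ZMod p, ∑ b : ZMod p, h a b := by
  have := sum_comp_surj (jmap p c) (jmap_surj p c hc) (p ^ (m-2))
    (by
      rw [hcard, Fintype.card_prod, ZMod.card]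
      rw [← pow_two, ← pow_add]
      congr 1
      omega) (fun w => h w.1 w.2)
  simp only [jmap, AddMonoidHom.coe_mk, ZeroHom.coe_mk] at this
  rw [this, Fintype.sum_prod_type]
  push_cast
  ring

lemma fieldsum_gen (hp2 : p ≠ 2) (hm : 2 ≤ m) (hcard : Fintype.card F = p ^ m) (c : F)
    (hc : ∀ u : ZMod p, algebraMap (ZMod p) F u ≠ c) :
    ∑ x : F, f' p (Algebra.trace (ZMod p) F x) * g' p (Algebra.trace (ZMod p) F (c * x))
      = -(p:ℤ)^(m-2) := by
  rw [sum_jmap p m hm hcard c hc (fun a b => f' p a * g' p b)]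
  have : ∀ a : ZMod p, ∑ b : ZMod p, f' p a * g' p b = f' p a * -1 := by
    intro a; rw [← Finset.mul_sum, sum_g' p hp2]
  rw [Finset.sum_congr rfl (fun a _ => this a), ← Finset.sum_mul, sum_f' p hp2]
  ring

lemma fieldsum_sub (hm : 1 ≤ m) (hcard : Fintype.card F = p ^ m) (u : ZMod p) (hu : u ≠ 0) :
    ∑ x : F, f' p (Algebra.trace (ZMod p) F x)
        * g' p (Algebra.trace (ZMod p) F (algebraMap (ZMod p) F u * x))
      = (p:ℤ)^(m-1) * (((p : ℤ) - 1) * l' p u - 1) := by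
  have h1 : ∀ x : F, f' p (Algebra.trace (ZMod p) F x)
      * g' p (Algebra.trace (ZMod p) F (algebraMap (ZMod p) F u * x))
      = f' p (Algebra.trace (ZMod p) F x) * g' p (u * Algebra.trace (ZMod p) F x) := by
    intro x; rw [tr_smul]
  rw [Finset.sum_congr rfl (fun x _ => h1 x),
    sum_trace p m hm hcard (fun a => f' p a * g' p (u * a)), sum_f'g' p u hu]

/-- `K = (p^m - 1)/(p - 1)`, the half-period. -/
def Kc (p m : ℕ) : ℕ := (p ^ m - 1) / (p - 1)
/-- `N = 2K`, the period. -/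
def Nc (p m : ℕ) : ℕ := 2 * Kc p m

variable (m : ℕ)

lemma Kc_mul (hp2 : p ≠ 2) (hm : 1 < m) : Kc p m * (p - 1) = p ^ m - 1 :=
  Nat.div_mul_cancel (by simpa using Nat.sub_dvd_pow_sub_pow p 1 m)

lemma hp3 : p ≠ 2 → 3 ≤ p := fun h => by
  have := (Fact.out (p := p.Prime)).two_le
  rcases Nat.lt_or_ge p 3 with h' | h'
  · interval_cases p <;> simp_all
  · exact h'

lemma q_ge (hp2 : p ≠ 2) (hm : 1 < m) : 9 ≤ p ^ m := by
  calc (9:ℕ) = 3 ^ 2 := rfl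
  _ ≤ p ^ 2 := Nat.pow_le_pow_left (hp3 p hp2) 2
  _ ≤ p ^ m := Nat.pow_le_pow_right (by have := hp3 p hp2; omega) hm

lemma Kc_pos (hp2 : p ≠ 2) (hm : 1 < m) : 0 < Kc p m := by
  have h1 := Kc_mul p m hp2 hm
  have h2 := q_ge p m hp2 hm
  rcases Nat.eq_zero_or_pos (Kc p m) with h | h
  · rw [h, zero_mul] at h1; omega
  · exact h

variable (ω : F)

lemma omega_ne_zero (hp2 : p ≠ 2) (hm : 1 < m) (hω : orderOf ω = p ^ m - 1) : ω ≠ 0 := by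
  intro h
  have h2 := q_ge p m hp2 hm
  have : ω ^ (p ^ m - 1) = 1 := hω ▸ pow_orderOf_eq_one ω
  rw [h, zero_pow (by omega)] at this
  exact zero_ne_one this

lemma exists_g0 (hp2 : p ≠ 2) (hm : 1 < m) (hcard : Fintype.card F = p ^ m)
    (hω : orderOf ω = p ^ m - 1) :
    ∃ g0 : ZMod p, algebraMap (ZMod p) F g0 = ω ^ Kc p m ∧ g0 ≠ 0 ∧ l' p g0 = -1 := by
  classical
  have hq := q_ge p m hp2 hm
  have hKm := Kc_mul p m hp2 hm
  have hω0 := omega_ne_zero p m ω hp2 hm hω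
  have hp1 : 3 ≤ p := hp3 p hp2
  -- ω^K is a root of X^p - X
  have hroot : (ω ^ Kc p m) ^ p = ω ^ Kc p m := by
    rw [← pow_mul]
    have hKp : Kc p m * p = Kc p m + (p ^ m - 1) := by
      have hpp : p - 1 + 1 = p := by omega
      have h2 : Kc p m * p = Kc p m * (p - 1) + Kc p m := by
        calc Kc p m * p = Kc p m * (p - 1 + 1) := by rw [hpp]
        _ = Kc p m * (p - 1) + Kc p m := by ring
      rw [h2, hKm]; omega
    have h1 : ω ^ (p ^ m - 1) = 1 := by rw [← hω]; exact pow_orderOf_eq_one ω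
    rw [hKp, pow_add, h1, mul_one]
  -- roots of X^p - X are exactly the image of ZMod p
  set P : Polynomial F := Polynomial.X ^ p - Polynomial.X with hP
  have hPdeg : P.natDegree = p := by
    have hdx : (Polynomial.X : Polynomial F).natDegree
        < (Polynomial.X ^ p : Polynomial F).natDegree := by
      rw [Polynomial.natDegree_X_pow, Polynomial.natDegree_X]; omega
    rw [hP, Polynomial.natDegree_sub_eq_left_of_natDegree_lt hdx, Polynomial.natDegree_X_pow]
  have hP0 : P ≠ 0 := fun h => by simp [h] at hPdeg; omega
  have hinj : Function.Injective (algebraMap (ZMod p) F) := (algebraMap (ZMod p) F).injective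
  have hSsub : (Finset.univ.image (algebraMap (ZMod p) F)) ⊆ P.roots.toFinset := by
    intro x hx
    obtain ⟨u, _, rfl⟩ := Finset.mem_image.mp hx
    rw [Multiset.mem_toFinset, Polynomial.mem_roots hP0]
    simp only [hP, Polynomial.IsRoot, Polynomial.eval_sub, Polynomial.eval_pow,
      Polynomial.eval_X, sub_eq_zero]
    rw [← map_pow, ZMod.pow_card]
  have hcard1 : (Finset.univ.image (algebraMap (ZMod p) F)).card = p := by
    rw [Finset.card_image_of_injective _ hinj, Finset.card_univ, ZMod.card]
  have hcard2 : P.roots.toFinset.card ≤ p :=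
    le_trans (Multiset.toFinset_card_le _) (le_trans (Polynomial.card_roots' P) hPdeg.le)
  have hEq : (Finset.univ.image (algebraMap (ZMod p) F)) = P.roots.toFinset :=
    Finset.eq_of_subset_of_card_le hSsub (by omega)
  have hmem : ω ^ Kc p m ∈ P.roots.toFinset := by
    rw [Multiset.mem_toFinset, Polynomial.mem_roots hP0]
    simp only [hP, Polynomial.IsRoot, Polynomial.eval_sub, Polynomial.eval_pow,
      Polynomial.eval_X, sub_eq_zero]
    exact hroot
  rw [← hEq] at hmem
  obtain ⟨g0, _, hg0⟩ := Finset.mem_image.mp hmem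
  refine ⟨g0, hg0, ?_, ?_⟩
  · intro h
    rw [h, map_zero] at hg0
    exact pow_ne_zero _ hω0 hg0.symm
  · -- orderOf g0 = p - 1, hence not a square, hence Legendre symbol -1
    have hg0ne : g0 ≠ 0 := by
      intro h; rw [h, map_zero] at hg0; exact pow_ne_zero _ hω0 hg0.symm
    have hKdvd : Kc p m ∣ p ^ m - 1 := ⟨p - 1, hKm.symm⟩
    have hKpos := Kc_pos p m hp2 hm
    have hordpow : orderOf (ω ^ Kc p m) = p - 1 := by
      rw [orderOf_pow' ω hKpos.ne', hω, Nat.gcd_eq_right hKdvd]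
      exact Nat.div_eq_of_eq_mul_left hKpos (by rw [← hKm]; ring)
    have hord : orderOf g0 = p - 1 := by
      have := orderOf_injective (algebraMap (ZMod p) F).toMonoidHom hinj g0
      simp only [RingHom.toMonoidHom_eq_coe, MonoidHom.coe_coe] at this
      rw [← this, hg0, hordpow]
    rw [l'_eq, quadraticChar_neg_one_iff_not_isSquare]
    rintro ⟨h, hsq⟩
    have hhne : h ≠ 0 := by
      intro hh; rw [hh, mul_zero] at hsq; exact hg0ne hsq
    have hpow : g0 ^ ((p - 1) / 2) = 1 := by
      have h2 : 2 * ((p - 1) / 2) = p - 1 := by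
        have := (Fact.out (p := p.Prime)).odd_of_ne_two hp2
        obtain ⟨k, hk⟩ := this
        omega
      rw [hsq, ← pow_two, ← pow_mul, h2, ZMod.pow_card_sub_one_eq_one hhne]
    have hdvd := orderOf_dvd_of_pow_eq_one hpow
    rw [hord] at hdvd
    have := Nat.le_of_dvd (by omega) hdvd
    omega

/-- `fω n = f'(Tr(ω^n))`: the sign `(-1)^{t¹_n}`. -/
noncomputable def fω (n : ℕ) : ℤ := f' p (Algebra.trace (ZMod p) F (ω ^ n))
/-- `gω n = g'(Tr(ω^n))`: the sign `(-1)^{t²_n}`. -/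
noncomputable def gω (n : ℕ) : ℤ := g' p (Algebra.trace (ZMod p) F (ω ^ n))

lemma f'_sqmul (b a : ZMod p) (hb : b ≠ 0) : f' p (b * b * a) = f' p a := by
  by_cases ha : a = 0
  · rw [ha, mul_zero]
  · have h1 : b * b * a ≠ 0 := mul_ne_zero (mul_ne_zero hb hb) ha
    rw [f', f', if_neg ha, if_neg h1, l'_mul, l'_mul, l'_sq p b hb, one_mul]

lemma g'_sqmul (b a : ZMod p) (hb : b ≠ 0) : g' p (b * b * a) = g' p a := by
  by_cases ha : a = 0
  · rw [ha, mul_zero]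
  · have h1 : b * b * a ≠ 0 := mul_ne_zero (mul_ne_zero hb hb) ha
    rw [g', g', if_neg ha, if_neg h1, l'_mul, l'_mul, l'_sq p b hb, one_mul]

section seq
variable (hp2 : p ≠ 2) (hm : 1 < m) (hcard : Fintype.card F = p ^ m)
  (hω : orderOf ω = p ^ m - 1)
include hp2 hm hcard hω

lemma fω_step (n : ℕ) : fω p ω (n + Nc p m) = fω p ω n := by
  obtain ⟨g0, hg0, hg0ne, _⟩ := exists_g0 p m ω hp2 hm hcard hω
  have h1 : ω ^ (n + Nc p m) = algebraMap (ZMod p) F (g0 * g0) * ω ^ n := by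
    rw [pow_add, Nc, two_mul, pow_add, ← hg0, map_mul]; ring
  rw [fω, fω, h1, tr_smul, f'_sqmul p _ _ hg0ne]

lemma gω_step (n : ℕ) : gω p ω (n + Nc p m) = gω p ω n := by
  obtain ⟨g0, hg0, hg0ne, _⟩ := exists_g0 p m ω hp2 hm hcard hω
  have h1 : ω ^ (n + Nc p m) = algebraMap (ZMod p) F (g0 * g0) * ω ^ n := by
    rw [pow_add, Nc, two_mul, pow_add, ← hg0, map_mul]; ring
  rw [gω, gω, h1, tr_smul, g'_sqmul p _ _ hg0ne]

end seq

lemma periodic_add {v : ℕ → ℤ} {T : ℕ} (hv : ∀ n, v (n + T) = v n) (a k : ℕ) :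
    v (a + T * k) = v a := by
  induction k with
  | zero => simp
  | succ k ih => rw [Nat.mul_succ, ← Nat.add_assoc, hv, ih]

lemma periodic_congr {v : ℕ → ℤ} {T : ℕ} (hv : ∀ n, v (n + T) = v n) {a b : ℕ}
    (h : a ≡ b [MOD T]) : v a = v b := by
  rcases le_total a b with hab | hab
  · obtain ⟨k, hk⟩ := (Nat.modEq_iff_dvd' hab).mp h
    have : b = a + T * k := by omega
    rw [this, periodic_add hv]
  · obtain ⟨k, hk⟩ := (Nat.modEq_iff_dvd' hab).mp h.symm
    have : a = b + T * k := by omega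
    rw [this, periodic_add hv]

lemma sum_periodic_mul {v : ℕ → ℤ} {T : ℕ} (hv : ∀ n, v (n + T) = v n) (k : ℕ) :
    ∑ i ∈ Finset.range (k * T), v i = k * ∑ i ∈ Finset.range T, v i := by
  induction k with
  | zero => simp
  | succ k ih =>
    have hsplit : ∑ i ∈ Finset.range (k * T + T), v i
        = (∑ i ∈ Finset.range (k * T), v i) + ∑ i ∈ Finset.Ico (k * T) (k * T + T), v i := by
      rw [Finset.range_eq_Ico, Finset.range_eq_Ico, Finset.sum_Ico_consecutive _ (Nat.zero_le _) (by omega),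
        ← Finset.range_eq_Ico]
    have h2 : ∑ i ∈ Finset.Ico (k * T) (k * T + T), v i = ∑ i ∈ Finset.range T, v i := by
      rw [Finset.sum_Ico_eq_sum_range]
      simp only [Nat.add_sub_cancel_left]
      refine Finset.sum_congr rfl fun i _ => ?_
      have : k * T + i = i + T * k := by ring
      rw [this, periodic_add hv]
    rw [Nat.succ_mul, hsplit, h2, ih]
    push_cast
    ring

lemma sum_periodic_rot {v : ℕ → ℤ} {T : ℕ} (hv : ∀ n, v (n + T) = v n) :
    ∑ i ∈ Finset.range T, v (i + 1) = ∑ i ∈ Finset.range T, v i := by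
  have h1 := Finset.sum_range_succ' v T
  have h2 := Finset.sum_range_succ v T
  have h3 : v T = v 0 := by have := hv 0; simpa using this
  omega

/-- The shifted correlation sum `E a b = ∑_{j<N} fω (j+a) gω (j+b)`. -/
noncomputable def Eseq (a b : ℕ) : ℤ := ∑ j ∈ Finset.range (Nc p m), fω p ω (j + a) * gω p ω (j + b)

/-- The cross-correlation `C t = E 0 t`. -/
noncomputable def Cseq (t : ℕ) : ℤ := Eseq p m ω 0 t

section seq2
variable (hp2 : p ≠ 2) (hm : 1 < m) (hcard : Fintype.card F = p ^ m)
  (hω : orderOf ω = p ^ m - 1)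
include hp2 hm hcard hω

lemma Eseq_succ (a b : ℕ) : Eseq p m ω (a + 1) (b + 1) = Eseq p m ω a b := by
  have hper : ∀ n, (fun j => fω p ω (j + a) * gω p ω (j + b)) (n + Nc p m)
      = (fun j => fω p ω (j + a) * gω p ω (j + b)) n := by
    intro n
    simp only
    have h1 : n + Nc p m + a = (n + a) + Nc p m := by ring
    have h2 : n + Nc p m + b = (n + b) + Nc p m := by ring
    rw [h1, h2, fω_step p m ω hp2 hm hcard hω, gω_step p m ω hp2 hm hcard hω]
  have := sum_periodic_rot (v := fun j => fω p ω (j + a) * gω p ω (j + b)) (T := Nc p m) hper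
  rw [Eseq, Eseq, ← this]
  refine Finset.sum_congr rfl fun j _ => ?_
  have h1 : j + 1 + a = j + (a + 1) := by ring
  have h2 : j + 1 + b = j + (b + 1) := by ring
  rw [h1, h2]

lemma Eseq_add (a b c : ℕ) : Eseq p m ω (a + c) (b + c) = Eseq p m ω a b := by
  induction c with
  | zero => simp
  | succ c ih =>
    have h1 : a + (c + 1) = (a + c) + 1 := by ring
    have h2 : b + (c + 1) = (b + c) + 1 := by ring
    rw [h1, h2, Eseq_succ p m ω hp2 hm hcard hω, ih]

lemma fω_congr {a b : ℕ} (h : a ≡ b [MOD Nc p m]) : fω p ω a = fω p ω b :=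
  periodic_congr (fω_step p m ω hp2 hm hcard hω) h

lemma gω_congr {a b : ℕ} (h : a ≡ b [MOD Nc p m]) : gω p ω a = gω p ω b :=
  periodic_congr (gω_step p m ω hp2 hm hcard hω) h

lemma Eseq_congr {a a' b b' : ℕ} (ha : a ≡ a' [MOD Nc p m]) (hb : b ≡ b' [MOD Nc p m]) :
    Eseq p m ω a b = Eseq p m ω a' b' := by
  refine Finset.sum_congr rfl fun j _ => ?_
  rw [fω_congr p m ω hp2 hm hcard hω (Nat.ModEq.add_left j ha),
    gω_congr p m ω hp2 hm hcard hω (Nat.ModEq.add_left j hb)]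

end seq2

lemma two_dvd_p_sub_one : p ≠ 2 → 2 ∣ p - 1 := fun h => by
  have := (Fact.out (p := p.Prime)).odd_of_ne_two h
  obtain ⟨k, hk⟩ := this
  omega

section eval
variable (hp2 : p ≠ 2) (hm : 1 < m) (hcard : Fintype.card F = p ^ m)
  (hω : orderOf ω = p ^ m - 1)
include hp2 hm hcard hω

lemma sum_pow_omega (v : F → ℤ) :
    ∑ j ∈ Finset.range (p ^ m - 1), v (ω ^ j) = (∑ x : F, v x) - v 0 := by
  classical
  rw [← Finset.sum_erase_add Finset.univ v (Finset.mem_univ (0 : F)), add_sub_cancel_right]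
  have hω0 := omega_ne_zero p m ω hp2 hm hω
  have hq := q_ge p m hp2 hm
  set ωu : Fˣ := (isUnit_iff_ne_zero.mpr hω0).unit with hωu
  have hωuval : (ωu : F) = ω := IsUnit.unit_spec _
  have hordu : orderOf ωu = p ^ m - 1 := by rw [← orderOf_units, hωuval, hω]
  refine Finset.sum_bij (fun j _ => ω ^ j) ?_ ?_ ?_ ?_
  · intro j hj
    exact Finset.mem_erase.mpr ⟨pow_ne_zero _ hω0, Finset.mem_univ _⟩
  · intro a ha b hb hab
    have ha' : a < p ^ m - 1 := Finset.mem_range.mp ha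
    have hb' : b < p ^ m - 1 := Finset.mem_range.mp hb
    have : ωu ^ a = ωu ^ b := by
      apply Units.ext
      rw [Units.val_pow_eq_pow_val, Units.val_pow_eq_pow_val, hωuval]
      exact hab
    exact pow_injOn_Iio_orderOf (by rw [hordu]; exact ha') (by rw [hordu]; exact hb') this
  · intro x hx
    have hx0 : x ≠ 0 := (Finset.mem_erase.mp hx).1
    set xu : Fˣ := (isUnit_iff_ne_zero.mpr hx0).unit with hxu
    have hxuval : (xu : F) = x := IsUnit.unit_spec _
    have htop : Subgroup.zpowers ωu = ⊤ := by
      apply Subgroup.eq_top_of_card_eq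
      rw [Nat.card_zpowers, hordu, Nat.card_eq_fintype_card, Fintype.card_units, hcard]
    have hmem : xu ∈ Submonoid.powers ωu := by
      rw [mem_powers_iff_mem_zpowers, htop]
      exact Subgroup.mem_top _
    obtain ⟨n, hn'⟩ := hmem
    have hn : ωu ^ n = xu := hn'
    refine ⟨n % (p ^ m - 1), Finset.mem_range.mpr (Nat.mod_lt _ (by omega)), ?_⟩
    have : ωu ^ (n % (p ^ m - 1)) = xu := by rw [← hordu, pow_mod_orderOf, hn]
    rw [← hxuval, ← this, Units.val_pow_eq_pow_val, hωuval]
  · intro j hj; rfl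

lemma C_to_field (t : ℕ) :
    ((p:ℤ) - 1) * Cseq p m ω t
      = 2 * ((∑ x : F, f' p (Algebra.trace (ZMod p) F x)
          * g' p (Algebra.trace (ZMod p) F (ω ^ t * x))) + 1) := by
  have hq := q_ge p m hp2 hm
  have hKm := Kc_mul p m hp2 hm
  -- the summand as a function of j is N-periodic
  have hper : ∀ n, (fun j => fω p ω j * gω p ω (j + t)) (n + Nc p m)
      = (fun j => fω p ω j * gω p ω (j + t)) n := by
    intro n
    simp only
    have h2 : n + Nc p m + t = (n + t) + Nc p m := by ring
    rw [h2, fω_step p m ω hp2 hm hcard hω, gω_step p m ω hp2 hm hcard hω]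
  have h2d : 2 ∣ p - 1 := two_dvd_p_sub_one p hp2
  have hcount : ((p - 1) / 2) * Nc p m = p ^ m - 1 := by
    rw [Nc]
    calc (p-1)/2 * (2 * Kc p m) = ((p-1)/2 * 2) * Kc p m := by ring
    _ = (p - 1) * Kc p m := by rw [Nat.div_mul_cancel h2d]
    _ = p ^ m - 1 := by rw [mul_comm]; exact hKm
  have hbig : ∑ j ∈ Finset.range (p ^ m - 1), fω p ω j * gω p ω (j + t)
      = ((p - 1) / 2 : ℕ) * Cseq p m ω t := by
    rw [← hcount, sum_periodic_mul hper]
    congr 1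
  -- identify with the field sum
  have hfun : ∀ j : ℕ, fω p ω j * gω p ω (j + t)
      = (fun x => f' p (Algebra.trace (ZMod p) F x)
          * g' p (Algebra.trace (ZMod p) F (ω ^ t * x))) (ω ^ j) := by
    intro j
    simp only [fω, gω]
    congr 2
    rw [pow_add]; ring
  have hfield : ∑ j ∈ Finset.range (p ^ m - 1), fω p ω j * gω p ω (j + t)
      = (∑ x : F, f' p (Algebra.trace (ZMod p) F x)
          * g' p (Algebra.trace (ZMod p) F (ω ^ t * x))) + 1 := by
    rw [Finset.sum_congr rfl fun j _ => hfun j]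
    have := sum_pow_omega p m ω hp2 hm hcard hω
      (fun x => f' p (Algebra.trace (ZMod p) F x)
          * g' p (Algebra.trace (ZMod p) F (ω ^ t * x)))
    have h0 : f' p (Algebra.trace (ZMod p) F (0:F))
        * g' p (Algebra.trace (ZMod p) F (ω ^ t * 0)) = -1 := by
      simp [f', g']
    rw [this, h0]
    ring
  have hfinal : ((p - 1) / 2 : ℕ) * Cseq p m ω t
      = (∑ x : F, f' p (Algebra.trace (ZMod p) F x)
          * g' p (Algebra.trace (ZMod p) F (ω ^ t * x))) + 1 := by
    rw [← hbig, hfield]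
  have h2 : ((p:ℤ) - 1) = 2 * ((p - 1) / 2 : ℕ) := by
    obtain ⟨k, hk⟩ := h2d
    have hp1 : 3 ≤ p := hp3 p hp2
    push_cast
    omega
  rw [h2, mul_assoc, hfinal]

lemma C_eval_zero {t : ℕ} (h : t % Nc p m = 0) :
    ((p:ℤ) - 1) * Cseq p m ω t = 2 * ((p:ℤ) ^ (m-1) * ((p:ℤ) - 2) + 1) := by
  obtain ⟨g0, hg0, hg0ne, hg0l⟩ := exists_g0 p m ω hp2 hm hcard hω
  obtain ⟨d, hd⟩ := Nat.dvd_of_mod_eq_zero h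
  have hsub : ω ^ t = algebraMap (ZMod p) F (g0 ^ (2 * d)) := by
    rw [hd, map_pow, hg0, ← pow_mul]
    congr 1
    rw [Nc]; ring
  have hu : g0 ^ (2*d) ≠ 0 := pow_ne_zero _ hg0ne
  have hl : l' p (g0 ^ (2*d)) = 1 := by
    have : l' p (g0 ^ (2*d)) = (l' p g0) ^ (2*d) := by
      simp only [l'_eq]; exact map_pow _ _ _
    rw [this, hg0l]
    rw [pow_mul]
    norm_num
  rw [C_to_field p m ω hp2 hm hcard hω t, hsub,
    fieldsum_sub p m (by omega) hcard _ hu, hl]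
  ring

lemma C_eval_K {t : ℕ} (h : t % Nc p m = Kc p m) :
    ((p:ℤ) - 1) * Cseq p m ω t = 2 * (1 - (p:ℤ) ^ m) := by
  obtain ⟨g0, hg0, hg0ne, hg0l⟩ := exists_g0 p m ω hp2 hm hcard hω
  have hd : t = Nc p m * (t / Nc p m) + Kc p m := by
    conv_lhs => rw [← Nat.div_add_mod t (Nc p m)]
    rw [h]
  have hsub : ω ^ t = algebraMap (ZMod p) F (g0 ^ (2 * (t / Nc p m) + 1)) := by
    conv_lhs => rw [hd]
    rw [map_pow, hg0, ← pow_mul]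
    congr 1
    rw [Nc]; ring
  have hu : g0 ^ (2 * (t / Nc p m) + 1) ≠ 0 := pow_ne_zero _ hg0ne
  have hl : l' p (g0 ^ (2 * (t / Nc p m) + 1)) = -1 := by
    have : l' p (g0 ^ (2 * (t / Nc p m) + 1)) = (l' p g0) ^ (2 * (t / Nc p m) + 1) := by
      simp only [l'_eq]; exact map_pow _ _ _
    rw [this, hg0l, pow_add, pow_mul, pow_one]
    norm_num
  have hm1 : (p:ℤ) ^ (m - 1) * p = (p:ℤ) ^ m := by
    rw [← pow_succ]
    congr 1
    omega
  rw [C_to_field p m ω hp2 hm hcard hω t, hsub,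
    fieldsum_sub p m (by omega) hcard _ hu, hl]
  nlinarith [hm1]

lemma C_eval_gen {t : ℕ} (h0 : t % Nc p m ≠ 0) (hK : t % Nc p m ≠ Kc p m) :
    ((p:ℤ) - 1) * Cseq p m ω t = 2 * (1 - (p:ℤ) ^ (m-2)) := by
  have hq := q_ge p m hp2 hm
  have hKm := Kc_mul p m hp2 hm
  have hKpos := Kc_pos p m hp2 hm
  have hω0 := omega_ne_zero p m ω hp2 hm hω
  have hc : ∀ u : ZMod p, algebraMap (ZMod p) F u ≠ ω ^ t := by
    intro u hu
    have hu0 : u ≠ 0 := by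
      intro h; rw [h, map_zero] at hu; exact pow_ne_zero _ hω0 hu.symm
    have h1 : ω ^ (t * (p - 1)) = 1 := by
      rw [pow_mul, ← hu, ← map_pow, ZMod.pow_card_sub_one_eq_one hu0, map_one]
    have h2 : p ^ m - 1 ∣ t * (p - 1) := hω ▸ orderOf_dvd_of_pow_eq_one h1
    rw [← hKm] at h2
    have h3 : Kc p m ∣ t := by
      have hp1 : 0 < p - 1 := by have := hp3 p hp2; omega
      exact (Nat.mul_dvd_mul_iff_right hp1).mp h2
    obtain ⟨s, hs⟩ := h3
    have h4 : t % Nc p m = Kc p m * (s % 2) := by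
      rw [hs, Nc, mul_comm 2 (Kc p m), Nat.mul_mod_mul_left]
    rcases Nat.mod_two_eq_zero_or_one s with h5 | h5 <;> rw [h5] at h4 <;> simp at h4 <;> omega
  rw [C_to_field p m ω hp2 hm hcard hω t,
    fieldsum_gen p m hp2 hm hcard _ hc]
  ring

end eval

lemma neg_one_pow_add (a b : ZMod 2) :
    ((-1:ℤ))^((a+b).val) = (-1)^a.val * (-1)^b.val := by revert a b; decide

section link
variable (hp2 : p ≠ 2) (hm : 1 < m) (hcard : Fintype.card F = p ^ m)
  (hω : orderOf ω = p ^ m - 1)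

lemma t1_sign (n : ℕ) : ((-1:ℤ))^((ntuT1 p ω n).val) = fω p ω n := by
  have hl : legendreSym p (((Algebra.trace (ZMod p) F (ω ^ n)).val : ℤ))
      = l' p (Algebra.trace (ZMod p) F (ω ^ n)) := rfl
  rw [ntuT1, hl, fω, f']
  by_cases h : Algebra.trace (ZMod p) F (ω ^ n) = 0
  · rw [if_pos h, h, l'_zero]
    norm_num
  · rw [if_neg h]
    have hd := quadraticChar_dichotomy (F := ZMod p) h
    rw [← l'_eq] at hd
    rcases hd with h1 | h1 <;> rw [h1]
    · rw [if_neg (by norm_num)]; decide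
    · rw [if_pos rfl]; decide

lemma t2_sign (n : ℕ) : ((-1:ℤ))^((ntuT2 p ω n).val) = gω p ω n := by
  have hl : legendreSym p (((Algebra.trace (ZMod p) F (ω ^ n)).val : ℤ))
      = l' p (Algebra.trace (ZMod p) F (ω ^ n)) := rfl
  rw [ntuT2, hl, gω, g']
  by_cases h : Algebra.trace (ZMod p) F (ω ^ n) = 0
  · rw [if_pos h, h, l'_zero]
    rw [if_neg (by norm_num)]; decide
  · rw [if_neg h]
    have hd := quadraticChar_dichotomy (F := ZMod p) h
    rw [← l'_eq] at hd
    rcases hd with h1 | h1 <;> rw [h1]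
    · rw [if_pos rfl]; decide
    · rw [if_neg (by norm_num)]; decide

end link

lemma sum_range_even_odd (n : ℕ) (v : ℕ → ℤ) :
    ∑ i ∈ Finset.range (2 * n), v i
      = (∑ j ∈ Finset.range n, v (2*j)) + ∑ j ∈ Finset.range n, v (2*j+1) := by
  induction n with
  | zero => simp
  | succ n ih =>
    have h : 2 * (n+1) = (2*n) + 1 + 1 := by ring
    rw [h, Finset.sum_range_succ, Finset.sum_range_succ,
      Finset.sum_range_succ (fun j => v (2*j)), Finset.sum_range_succ (fun j => v (2*j+1)), ih]
    ring

lemma interleave_even (t u : ℕ → ZMod 2) (e j : ℕ) : ntuInterleave t u e (2*j) = t j := by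
  have h1 : (2*j) % 2 = 0 := by omega
  have h2 : (2*j) / 2 = j := by omega
  rw [ntuInterleave, if_pos h1, h2]

lemma interleave_odd (t u : ℕ → ZMod 2) (e j : ℕ) :
    ntuInterleave t u e (2*j+1) = u (j + e) := by
  have h1 : ¬ ((2*j+1) % 2 = 0) := by omega
  have h2 : (2*j+1) / 2 = j := by omega
  rw [ntuInterleave, if_neg h1, h2]

lemma mod_odd_idx (T a : ℕ) (hT : 0 < T) : (2*a+1) % (2*T) = 2*(a % T) + 1 := by
  conv_lhs => rw [← Nat.div_add_mod a T]
  have h : 2*(T*(a/T) + a%T)+1 = (2*(a%T)+1) + (a/T)*(2*T) := by ring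
  rw [h, Nat.add_mul_mod_self_right]
  exact Nat.mod_eq_of_lt (by have := Nat.mod_lt a hT; omega)

lemma mod_even_idx (T a : ℕ) (hT : 0 < T) : (2*a) % (2*T) = 2*(a % T) := by
  conv_lhs => rw [← Nat.div_add_mod a T]
  have h : 2*(T*(a/T) + a%T) = (2*(a%T)) + (a/T)*(2*T) := by ring
  rw [h, Nat.add_mul_mod_self_right]
  exact Nat.mod_eq_of_lt (by have := Nat.mod_lt a hT; omega)

section assemble
variable (hp2 : p ≠ 2) (hm : 1 < m) (hcard : Fintype.card F = p ^ m)
  (hω : orderOf ω = p ^ m - 1)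
include hp2 hm hcard hω

lemma pcorr_eq (e t0 : ℕ) :
    pcorr (2 * Nc p m) (ntuInterleave (ntuT1 p ω) (ntuT2 p ω) e)
        (ntuInterleave (ntuT1 p ω) (ntuT2 p ω) e) (2 * (t0:ℤ) + 1)
      = Cseq p m ω (t0 + e) + Cseq p m ω (e + (t0 + 1) * (Nc p m - 1)) := by
  have hKpos := Kc_pos p m hp2 hm
  have hNpos : 0 < Nc p m := by rw [Nc]; omega
  set S := ntuInterleave (ntuT1 p ω) (ntuT2 p ω) e with hS
  set Nn := Nc p m with hNn
  -- reduce the integer index arithmetic to natural numbers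
  have hidx : ∀ i : ℕ, ((((i:ℤ) + (2 * (t0:ℤ) + 1)) % ((2 * Nn : ℕ) : ℤ)).toNat)
      = (i + (2 * t0 + 1)) % (2 * Nn) := by
    intro i
    have h1 : (i:ℤ) + (2 * (t0:ℤ) + 1) = ((i + (2 * t0 + 1) : ℕ) : ℤ) := by push_cast; ring
    rw [h1, ← Int.natCast_mod, Int.toNat_natCast]
  rw [pcorr]
  rw [Finset.sum_congr rfl (fun i _ => by rw [hidx i])]
  rw [sum_range_even_odd (Nn) (fun i => (-1:ℤ) ^ (S i + S ((i + (2 * t0 + 1)) % (2 * Nn))).val)]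
  -- even part
  have heven : ∀ j, (-1:ℤ) ^ (S (2*j) + S ((2*j + (2 * t0 + 1)) % (2 * Nn))).val
      = fω p ω (j + 0) * gω p ω (j + (t0 + e)) := by
    intro j
    have hi : 2*j + (2*t0+1) = 2*(j + t0) + 1 := by ring
    rw [hi, mod_odd_idx Nn (j + t0) hNpos, neg_one_pow_add, hS, interleave_even, interleave_odd,
      t1_sign p ω, t2_sign p ω]
    rw [Nat.add_zero]
    congr 1
    apply gω_congr p m ω hp2 hm hcard hω
    have h2 : (j + t0) % Nn + e ≡ (j + t0) + e [MOD Nn] :=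
      Nat.ModEq.add_right e (Nat.mod_modEq _ _)
    have h3 : j + t0 + e = j + (t0 + e) := by ring
    rw [← h3]; exact h2
  -- odd part
  have hodd : ∀ j, (-1:ℤ) ^ (S (2*j+1) + S ((2*j+1 + (2 * t0 + 1)) % (2 * Nn))).val
      = fω p ω (j + (t0+1)) * gω p ω (j + e) := by
    intro j
    have hi : 2*j+1 + (2*t0+1) = 2*(j + t0 + 1) := by ring
    rw [hi, mod_even_idx Nn (j + t0 + 1) hNpos, neg_one_pow_add, hS, interleave_odd,
      interleave_even, t1_sign p ω, t2_sign p ω]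
    rw [mul_comm]
    congr 1
    apply fω_congr p m ω hp2 hm hcard hω
    have h2 : (j + t0 + 1) % Nn ≡ j + t0 + 1 [MOD Nn] := Nat.mod_modEq _ _
    have h3 : j + t0 + 1 = j + (t0 + 1) := by ring
    rw [← h3]; exact h2
  rw [Finset.sum_congr rfl (fun j _ => heven j), Finset.sum_congr rfl (fun j _ => hodd j)]
  have hE1 : ∑ j ∈ Finset.range Nn, fω p ω (j + 0) * gω p ω (j + (t0 + e))
      = Cseq p m ω (t0 + e) := rfl
  have hE2 : ∑ j ∈ Finset.range Nn, fω p ω (j + (t0+1)) * gω p ω (j + e)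
      = Cseq p m ω (e + (t0 + 1) * (Nn - 1)) := by
    have h1 : Eseq p m ω (t0+1) e
        = Eseq p m ω ((t0+1) + (t0+1)*(Nn-1)) (e + (t0+1)*(Nn-1)) :=
      (Eseq_add p m ω hp2 hm hcard hω _ _ _).symm
    have h2 : (t0+1) + (t0+1)*(Nn-1) = (t0+1) * Nn := by
      have : Nn - 1 + 1 = Nn := by omega
      calc (t0+1) + (t0+1)*(Nn-1) = (t0+1) * ((Nn - 1) + 1) := by ring
      _ = (t0+1) * Nn := by rw [this]
    have h3 : (t0+1) * Nn ≡ 0 [MOD Nn] :=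
      (Nat.modEq_zero_iff_dvd).mpr ⟨t0+1, mul_comm _ _⟩
    have h4 : Eseq p m ω ((t0+1) + (t0+1)*(Nn-1)) (e + (t0+1)*(Nn-1))
        = Eseq p m ω 0 (e + (t0+1)*(Nn-1)) := by
      rw [h2]
      exact Eseq_congr p m ω hp2 hm hcard hω h3 (Nat.ModEq.refl _)
    rw [show (∑ j ∈ Finset.range Nn, fω p ω (j + (t0+1)) * gω p ω (j + e))
        = Eseq p m ω (t0+1) e from rfl, h1, h4]
    rfl
  rw [hE1, hE2]

end assemble

end St7

theorem stmt7 (p m : ℕ) [Fact p.Prime] (hp2 : p ≠ 2) (hm : 1 < m)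
    (F : Type) [Field F] [Fintype F] [Algebra (ZMod p) F]
    (hcard : Fintype.card F = p ^ m) (ω : F) (hω : orderOf ω = p ^ m - 1)
    (N : ℕ) (hN : N = 2 * (p ^ m - 1) / (p - 1)) (N1 N2 : ℤ)
    (hN1 : N1 = -2 * (p : ℤ) ^ (m - 1) + 2 * ((p : ℤ) ^ (m - 1) - 1) / ((p : ℤ) - 1))
    (hN2 : N2 = 2 * ((p : ℤ) ^ (m - 2) - 1) / ((p : ℤ) - 1))
    (e : ℕ) (he : e < N) (hcond : ¬ (2 * (e : ℤ) ≡ 1 - ((N / 2 : ℕ) : ℤ) [ZMOD (N : ℤ)]))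
    (τ0 : ℤ) (hτ0 : 0 ≤ τ0) (hτ1 : τ0 ≤ (N : ℤ) - 1) :
    pcorr (2 * N) (ntuInterleave (ntuT1 p ω) (ntuT2 p ω) e) (ntuInterleave (ntuT1 p ω) (ntuT2 p ω) e) (2 * τ0 + 1) =
      if τ0 ≡ -(e : ℤ) - ((N / 2 : ℕ) : ℤ) [ZMOD (N : ℤ)] ∨ τ0 ≡ (e : ℤ) - 1 + ((N / 2 : ℕ) : ℤ) [ZMOD (N : ℤ)] then
        -(N : ℤ) - N2
      else if τ0 ≡ -(e : ℤ) [ZMOD (N : ℤ)] ∨ τ0 ≡ (e : ℤ) - 1 [ZMOD (N : ℤ)] then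
        -N1 - N2
      else -2 * N2 := by
  classical
  have hp' : 3 ≤ p := St7.hp3 p hp2
  have hKm := St7.Kc_mul p m hp2 hm
  have hKpos := St7.Kc_pos p m hp2 hm
  have hq := St7.q_ge p m hp2 hm
  have hNNc : N = St7.Nc p m := by
    rw [hN, St7.Nc, St7.Kc]
    exact Nat.mul_div_assoc 2 (by simpa using Nat.sub_dvd_pow_sub_pow p 1 m)
  have hNK2 : St7.Nc p m / 2 = St7.Kc p m := by rw [St7.Nc]; omega
  have hNc1 : 1 ≤ St7.Nc p m := by rw [St7.Nc]; omega
  have hKltN : St7.Kc p m < St7.Nc p m := by rw [St7.Nc]; omega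
  obtain ⟨t0, rfl⟩ : ∃ t0 : ℕ, (t0 : ℤ) = τ0 := ⟨τ0.toNat, Int.toNat_of_nonneg hτ0⟩
  rw [hNNc] at hcond ⊢
  rw [hNK2] at hcond ⊢
  rw [St7.pcorr_eq p m ω hp2 hm hcard hω e t0]
  -- integer abbreviations
  have NZ : ((St7.Nc p m : ℕ) : ℤ) = 2 * ((St7.Kc p m : ℕ) : ℤ) := by
    rw [St7.Nc]; push_cast; ring
  have shift : ∀ x y : ℤ, ((St7.Nc p m : ℕ) : ℤ) ∣ x - y →
      (((St7.Nc p m : ℕ) : ℤ) ∣ x ↔ ((St7.Nc p m : ℕ) : ℤ) ∣ y) := by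
    intro x y h
    constructor
    · intro hx; have := dvd_sub hx h; simpa using this
    · intro hy; have := dvd_add hy h; simpa using this
  have hBd : ((St7.Nc p m : ℕ) : ℤ) ∣
      ((e + (t0 + 1) * (St7.Nc p m - 1) : ℕ) : ℤ) - ((e:ℤ) - 1 - (t0:ℤ)) := by
    refine ⟨(t0:ℤ) + 1, ?_⟩
    have hc1 : ((St7.Nc p m - 1 : ℕ) : ℤ) = ((St7.Nc p m : ℕ) : ℤ) - 1 := by
      push_cast [Nat.cast_sub hNc1]; ring
    push_cast [hc1]
    ring
  -- nat-mod conditions as integer divisibilities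
  have hA0iff : (t0 + e) % St7.Nc p m = 0 ↔ ((St7.Nc p m : ℕ) : ℤ) ∣ ((t0:ℤ) + (e:ℤ)) := by
    rw [← Nat.dvd_iff_mod_eq_zero, ← Int.natCast_dvd_natCast]
    push_cast
    rfl
  have hmodKc : ∀ a : ℕ, a % St7.Nc p m = St7.Kc p m ↔
      ((St7.Nc p m : ℕ) : ℤ) ∣ ((a:ℤ) - ((St7.Kc p m : ℕ) : ℤ)) := by
    intro a
    have h1 : a % St7.Nc p m = St7.Kc p m ↔ a ≡ St7.Kc p m [MOD St7.Nc p m] := by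
      unfold Nat.ModEq
      rw [Nat.mod_eq_of_lt hKltN]
    rw [h1, Nat.modEq_iff_dvd, dvd_sub_comm]
  have hAKiff : (t0 + e) % St7.Nc p m = St7.Kc p m ↔
      ((St7.Nc p m : ℕ) : ℤ) ∣ ((t0:ℤ) + (e:ℤ) - ((St7.Kc p m : ℕ) : ℤ)) := by
    rw [hmodKc]
    have hcast : (((t0 + e : ℕ)):ℤ) - ((St7.Kc p m : ℕ):ℤ)
        = (t0:ℤ) + (e:ℤ) - ((St7.Kc p m : ℕ):ℤ) := by push_cast; ring
    rw [hcast]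
  have hB0iff : (e + (t0 + 1) * (St7.Nc p m - 1)) % St7.Nc p m = 0 ↔
      ((St7.Nc p m : ℕ) : ℤ) ∣ ((e:ℤ) - 1 - (t0:ℤ)) := by
    rw [← Nat.dvd_iff_mod_eq_zero, ← Int.natCast_dvd_natCast]
    exact shift _ _ hBd
  have hBKiff : (e + (t0 + 1) * (St7.Nc p m - 1)) % St7.Nc p m = St7.Kc p m ↔
      ((St7.Nc p m : ℕ) : ℤ) ∣ ((e:ℤ) - 1 - (t0:ℤ) - ((St7.Kc p m : ℕ) : ℤ)) := by
    rw [hmodKc]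
    exact shift _ _ (by
      have : ((e + (t0 + 1) * (St7.Nc p m - 1) : ℕ) : ℤ) - ((St7.Kc p m : ℕ) : ℤ)
          - (((e:ℤ) - 1 - (t0:ℤ)) - ((St7.Kc p m : ℕ) : ℤ))
          = ((e + (t0 + 1) * (St7.Nc p m - 1) : ℕ) : ℤ) - ((e:ℤ) - 1 - (t0:ℤ)) := by ring
      rw [this]
      exact hBd)
  -- goal conditions as the same divisibilities
  have gc1a : ((t0:ℤ) ≡ -(e:ℤ) - ((St7.Kc p m : ℕ) : ℤ) [ZMOD ((St7.Nc p m : ℕ) : ℤ)]) ↔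
      ((St7.Nc p m : ℕ) : ℤ) ∣ ((t0:ℤ) + (e:ℤ) - ((St7.Kc p m : ℕ) : ℤ)) := by
    rw [Int.modEq_iff_dvd]
    have h1 : -(e:ℤ) - ((St7.Kc p m : ℕ) : ℤ) - (t0:ℤ)
        = -(((t0:ℤ) + (e:ℤ) - ((St7.Kc p m : ℕ) : ℤ)) + 2 * ((St7.Kc p m : ℕ) : ℤ)) := by ring
    rw [h1, dvd_neg]
    refine shift _ _ ?_
    rw [NZ]
    exact ⟨1, by ring⟩
  have gc2a : ((t0:ℤ) ≡ -(e:ℤ) [ZMOD ((St7.Nc p m : ℕ) : ℤ)]) ↔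
      ((St7.Nc p m : ℕ) : ℤ) ∣ ((t0:ℤ) + (e:ℤ)) := by
    rw [Int.modEq_iff_dvd]
    have h1 : -(e:ℤ) - (t0:ℤ) = -((t0:ℤ) + (e:ℤ)) := by ring
    rw [h1, dvd_neg]
  have gc1b : ((t0:ℤ) ≡ (e:ℤ) - 1 + ((St7.Kc p m : ℕ) : ℤ) [ZMOD ((St7.Nc p m : ℕ) : ℤ)]) ↔
      ((St7.Nc p m : ℕ) : ℤ) ∣ ((e:ℤ) - 1 - (t0:ℤ) - ((St7.Kc p m : ℕ) : ℤ)) := by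
    rw [Int.modEq_iff_dvd]
    have h1 : (e:ℤ) - 1 + ((St7.Kc p m : ℕ) : ℤ) - (t0:ℤ)
        = ((e:ℤ) - 1 - (t0:ℤ) - ((St7.Kc p m : ℕ) : ℤ)) + 2 * ((St7.Kc p m : ℕ) : ℤ) := by ring
    rw [h1]
    refine shift _ _ ?_
    rw [NZ]
    exact ⟨1, by ring⟩
  have gc2b : ((t0:ℤ) ≡ (e:ℤ) - 1 [ZMOD ((St7.Nc p m : ℕ) : ℤ)]) ↔
      ((St7.Nc p m : ℕ) : ℤ) ∣ ((e:ℤ) - 1 - (t0:ℤ)) := by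
    rw [Int.modEq_iff_dvd]
  -- parity and hcond exclusions
  have hpar : ¬ ((St7.Nc p m : ℕ) : ℤ) ∣ (2 * (e:ℤ) - 1) := by
    intro h
    obtain ⟨k, hk⟩ := h
    have h2 : (2:ℤ) ∣ 2 * (e:ℤ) - 1 := ⟨((St7.Kc p m : ℕ) : ℤ) * k, by rw [hk, NZ]; ring⟩
    obtain ⟨c, hc⟩ := h2
    omega
  have hcond' : ¬ ((St7.Nc p m : ℕ) : ℤ) ∣ (2 * (e:ℤ) - 1 - ((St7.Kc p m : ℕ) : ℤ)) := by
    intro h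
    apply hcond
    rw [Int.modEq_iff_dvd]
    have h1 : 1 - ((St7.Kc p m : ℕ) : ℤ) - 2 * (e:ℤ)
        = -(2 * (e:ℤ) - 1 - ((St7.Kc p m : ℕ) : ℤ)) - 2 * ((St7.Kc p m : ℕ) : ℤ) := by ring
    rw [h1]
    refine dvd_sub (dvd_neg.mpr h) ?_
    rw [NZ]
  have ex1 : ¬ (((St7.Nc p m : ℕ) : ℤ) ∣ ((t0:ℤ) + (e:ℤ))
      ∧ ((St7.Nc p m : ℕ) : ℤ) ∣ ((e:ℤ) - 1 - (t0:ℤ))) := by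
    rintro ⟨h1, h2⟩
    apply hpar
    have := dvd_add h1 h2
    have heq : (t0:ℤ) + (e:ℤ) + ((e:ℤ) - 1 - (t0:ℤ)) = 2 * (e:ℤ) - 1 := by ring
    rwa [heq] at this
  have ex2 : ¬ (((St7.Nc p m : ℕ) : ℤ) ∣ ((t0:ℤ) + (e:ℤ) - ((St7.Kc p m : ℕ) : ℤ))
      ∧ ((St7.Nc p m : ℕ) : ℤ) ∣ ((e:ℤ) - 1 - (t0:ℤ) - ((St7.Kc p m : ℕ) : ℤ))) := by
    rintro ⟨h1, h2⟩
    apply hpar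
    have h3 := dvd_add (dvd_add h1 h2) (dvd_refl ((St7.Nc p m : ℕ) : ℤ))
    have heq : (t0:ℤ) + (e:ℤ) - ((St7.Kc p m : ℕ) : ℤ)
        + ((e:ℤ) - 1 - (t0:ℤ) - ((St7.Kc p m : ℕ) : ℤ)) + ((St7.Nc p m : ℕ) : ℤ)
        = 2 * (e:ℤ) - 1 := by rw [NZ]; ring
    rwa [heq] at h3
  have ex3 : ¬ (((St7.Nc p m : ℕ) : ℤ) ∣ ((t0:ℤ) + (e:ℤ))
      ∧ ((St7.Nc p m : ℕ) : ℤ) ∣ ((e:ℤ) - 1 - (t0:ℤ) - ((St7.Kc p m : ℕ) : ℤ))) := by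
    rintro ⟨h1, h2⟩
    apply hcond'
    have h3 := dvd_add h1 h2
    have heq : (t0:ℤ) + (e:ℤ) + ((e:ℤ) - 1 - (t0:ℤ) - ((St7.Kc p m : ℕ) : ℤ))
        = 2 * (e:ℤ) - 1 - ((St7.Kc p m : ℕ) : ℤ) := by ring
    rwa [heq] at h3
  have ex4 : ¬ (((St7.Nc p m : ℕ) : ℤ) ∣ ((t0:ℤ) + (e:ℤ) - ((St7.Kc p m : ℕ) : ℤ))
      ∧ ((St7.Nc p m : ℕ) : ℤ) ∣ ((e:ℤ) - 1 - (t0:ℤ))) := by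
    rintro ⟨h1, h2⟩
    apply hcond'
    have h3 := dvd_add h1 h2
    have heq : (t0:ℤ) + (e:ℤ) - ((St7.Kc p m : ℕ) : ℤ) + ((e:ℤ) - 1 - (t0:ℤ))
        = 2 * (e:ℤ) - 1 - ((St7.Kc p m : ℕ) : ℤ) := by ring
    rwa [heq] at h3
  -- value identities
  have hp1ne : ((p:ℤ) - 1) ≠ 0 := by
    have : (3:ℤ) ≤ (p:ℤ) := by exact_mod_cast hp'
    omega
  have hNcInt : ((p:ℤ) - 1) * ((St7.Nc p m : ℕ) : ℤ) = 2 * ((p:ℤ)^m - 1) := by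
    have h1 : ((St7.Kc p m : ℕ) : ℤ) * ((p:ℤ) - 1) = (p:ℤ)^m - 1 := by
      have h2 : (1:ℕ) ≤ p := by omega
      have h3 : (1:ℕ) ≤ p ^ m := by omega
      have h4 := congrArg (Nat.cast : ℕ → ℤ) hKm
      push_cast [Nat.cast_sub h2, Nat.cast_sub h3] at h4
      exact h4
    rw [NZ]
    linear_combination 2 * h1
  have d1 : ((p:ℤ) - 1) ∣ 2 * ((p:ℤ)^(m-1) - 1) := by
    refine Dvd.dvd.mul_left ?_ 2
    have := sub_dvd_pow_sub_pow (p:ℤ) 1 (m-1)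
    simpa using this
  have d2 : ((p:ℤ) - 1) ∣ 2 * ((p:ℤ)^(m-2) - 1) := by
    refine Dvd.dvd.mul_left ?_ 2
    have := sub_dvd_pow_sub_pow (p:ℤ) 1 (m-2)
    simpa using this
  have hN1Int : ((p:ℤ) - 1) * N1 = -2 * (p:ℤ)^(m-1) * ((p:ℤ) - 1) + 2 * ((p:ℤ)^(m-1) - 1) := by
    rw [hN1, mul_add, Int.mul_ediv_cancel' d1]
    ring
  have hN2Int : ((p:ℤ) - 1) * N2 = 2 * ((p:ℤ)^(m-2) - 1) := by
    rw [hN2, Int.mul_ediv_cancel' d2]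
  -- case analysis
  by_cases h1 : (t0 + e) % St7.Nc p m = St7.Kc p m
  · have hBK' : ¬ (e + (t0 + 1) * (St7.Nc p m - 1)) % St7.Nc p m = St7.Kc p m :=
      fun h => ex2 ⟨hAKiff.mp h1, hBKiff.mp h⟩
    have hB0' : ¬ (e + (t0 + 1) * (St7.Nc p m - 1)) % St7.Nc p m = 0 :=
      fun h => ex4 ⟨hAKiff.mp h1, hB0iff.mp h⟩
    rw [if_pos (Or.inl (gc1a.mpr (hAKiff.mp h1)))]
    apply mul_left_cancel₀ hp1ne
    rw [mul_add, St7.C_eval_K p m ω hp2 hm hcard hω h1,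
      St7.C_eval_gen p m ω hp2 hm hcard hω hB0' hBK']
    linear_combination hNcInt + hN2Int
  · by_cases h2 : (e + (t0 + 1) * (St7.Nc p m - 1)) % St7.Nc p m = St7.Kc p m
    · have hA0' : ¬ (t0 + e) % St7.Nc p m = 0 :=
        fun h => ex3 ⟨hA0iff.mp h, hBKiff.mp h2⟩
      rw [if_pos (Or.inr (gc1b.mpr (hBKiff.mp h2)))]
      apply mul_left_cancel₀ hp1ne
      rw [mul_add, St7.C_eval_gen p m ω hp2 hm hcard hω hA0' h1,
        St7.C_eval_K p m ω hp2 hm hcard hω h2]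
      linear_combination hNcInt + hN2Int
    · have hifneg : ¬ (((t0:ℤ) ≡ -(e:ℤ) - ((St7.Kc p m : ℕ) : ℤ) [ZMOD ((St7.Nc p m : ℕ) : ℤ)])
          ∨ ((t0:ℤ) ≡ (e:ℤ) - 1 + ((St7.Kc p m : ℕ) : ℤ) [ZMOD ((St7.Nc p m : ℕ) : ℤ)])) := by
        rintro (h | h)
        · exact h1 (hAKiff.mpr (gc1a.mp h))
        · exact h2 (hBKiff.mpr (gc1b.mp h))
      rw [if_neg hifneg]
      by_cases h3 : (t0 + e) % St7.Nc p m = 0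
      · have hB0' : ¬ (e + (t0 + 1) * (St7.Nc p m - 1)) % St7.Nc p m = 0 :=
          fun h => ex1 ⟨hA0iff.mp h3, hB0iff.mp h⟩
        rw [if_pos (Or.inl (gc2a.mpr (hA0iff.mp h3)))]
        apply mul_left_cancel₀ hp1ne
        rw [mul_add, St7.C_eval_zero p m ω hp2 hm hcard hω h3,
          St7.C_eval_gen p m ω hp2 hm hcard hω hB0' h2]
        linear_combination hN1Int + hN2Int
      · by_cases h4 : (e + (t0 + 1) * (St7.Nc p m - 1)) % St7.Nc p m = 0
        · rw [if_pos (Or.inr (gc2b.mpr (hB0iff.mp h4)))]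
          apply mul_left_cancel₀ hp1ne
          rw [mul_add, St7.C_eval_gen p m ω hp2 hm hcard hω h3 h1,
            St7.C_eval_zero p m ω hp2 hm hcard hω h4]
          linear_combination hN1Int + hN2Int
        · have hifneg2 : ¬ (((t0:ℤ) ≡ -(e:ℤ) [ZMOD ((St7.Nc p m : ℕ) : ℤ)])
              ∨ ((t0:ℤ) ≡ (e:ℤ) - 1 [ZMOD ((St7.Nc p m : ℕ) : ℤ)])) := by
            rintro (h | h)
            · exact h3 (hA0iff.mpr (gc2a.mp h))
            · exact h4 (hB0iff.mpr (gc2b.mp h))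
          rw [if_neg hifneg2]
          apply mul_left_cancel₀ hp1ne
          rw [mul_add, St7.C_eval_gen p m ω hp2 hm hcard hω h3 h1,
            St7.C_eval_gen p m ω hp2 hm hcard hω h4 h2]
          linear_combination 2 * hN2Int
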